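/- Let L be a Laplacian (zero row sums) of a graph with an external equitable partition π with M cells, P the characteristic matrix, P_H the associated projection, R = I_N − P_H, and L_π = (PᵀP)⁻¹PᵀLP the quotient Laplacian. Then the characteristic polynomial of RL equals x^M times the quotient of the characteristic polynomial of L by the characteristic polynomial of L_π; i.e., char(RL)·char(L_π) = x^M · char(L). -/
import Mathlib

open Matrix Polynomial

/-- charmatrix as X • 1 minus map C. -/
lemma charmatrix_eq_smul {n R : Type*} [Fintype n] [DecidableEq n] [CommRing R]
    (A : Matrix n n R) :
    charmatrix A = (X : R[X]) • (1 : Matrix n n R[X]) - A.map C := by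
  rw [charmatrix, scalar_apply, ← smul_one_eq_diagonal]
  rfl

lemma det_X_smul_one {n R : Type*} [Fintype n] [DecidableEq n] [CommRing R] :
    ((X : R[X]) • (1 : Matrix n n R[X])).det = X ^ Fintype.card n := by
  rw [det_smul, det_one, mul_one]

/-- If A + B = L and A * B = 0 then charpoly A * charpoly B = X^n * charpoly L. -/
lemma charpoly_mul_of_add_of_mul_eq_zero {n R : Type*} [Fintype n] [DecidableEq n] [CommRing R]
    (A B L : Matrix n n R) (hadd : A + B = L) (hmul : A * B = 0) :
    A.charpoly * B.charpoly = X ^ Fintype.card n * L.charpoly := by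
  set S : Matrix n n R[X] := (X : R[X]) • 1 with hS
  have key : charmatrix A * charmatrix B = S * charmatrix L := by
    simp only [charmatrix_eq_smul, ← hS]
    have hAB : (A.map C) * (B.map C) = 0 := by
      rw [← Matrix.map_mul (f := (C : R →+* R[X])), hmul, Matrix.map_zero _ (map_zero C)]
    have hL : A.map (C : R →+* R[X]) + B.map C = L.map C := by
      rw [← Matrix.map_add (C : R →+* R[X]) (map_add C) A B, hadd]
    have hcomm : (A.map (C : R →+* R[X])) * S = S * A.map C := by
      rw [hS, Matrix.mul_smul, Matrix.mul_one, Matrix.smul_mul, Matrix.one_mul]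
    rw [sub_mul, mul_sub, mul_sub, hAB, hcomm, ← hL, mul_sub, mul_add]
    abel
  have := congrArg Matrix.det key
  rwa [det_mul, det_mul, hS, det_X_smul_one] at this

/-- Rectangular "charpoly commutes" identity. -/
lemma charpoly_mul_comm_rect {n m R : Type*} [Fintype n] [Fintype m]
    [DecidableEq n] [DecidableEq m] [CommRing R]
    (P : Matrix n m R) (B : Matrix m n R) :
    (P * B).charpoly * X ^ Fintype.card m = X ^ Fintype.card n * (B * P).charpoly := by
  set Pc : Matrix n m R[X] := P.map C with hPc
  set Bc : Matrix m n R[X] := B.map C with hBc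
  set S₁ : Matrix n n R[X] := (X : R[X]) • 1 with hS₁
  set S₂ : Matrix m m R[X] := (X : R[X]) • 1 with hS₂
  set A : Matrix (n ⊕ m) (n ⊕ m) R[X] := fromBlocks S₁ Pc ((X : R[X]) • Bc) S₂ with hA
  set E : Matrix (n ⊕ m) (n ⊕ m) R[X] := fromBlocks 1 0 (-Bc) 1 with hE
  have hEA : E * A = fromBlocks S₁ Pc 0 (S₂ - Bc * Pc) := by
    rw [hE, hA, fromBlocks_multiply]
    simp [hS₁, hS₂, Matrix.mul_smul, Matrix.smul_mul, sub_eq_neg_add]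
  have hAE : A * E = fromBlocks (S₁ - Pc * Bc) Pc 0 S₂ := by
    rw [hE, hA, fromBlocks_multiply]
    simp [hS₁, hS₂, Matrix.mul_smul, Matrix.smul_mul, sub_eq_neg_add, add_comm]
  have hdet : (E * A).det = (A * E).det := by
    rw [det_mul, det_mul, mul_comm]
  rw [hEA, hAE, det_fromBlocks_zero₂₁, det_fromBlocks_zero₂₁] at hdet
  have e1 : S₁ - Pc * Bc = charmatrix (P * B) := by
    rw [charmatrix_eq_smul, hS₁, hPc, hBc, Matrix.map_mul]
  have e2 : S₂ - Bc * Pc = charmatrix (B * P) := by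
    rw [charmatrix_eq_smul, hS₂, hPc, hBc, Matrix.map_mul]
  rw [e1, e2, hS₁, hS₂, det_X_smul_one, det_X_smul_one] at hdet
  rw [Matrix.charpoly, Matrix.charpoly]
  exact hdet.symm

theorem stmt16 (N M : ℕ) (f : Fin N → Fin M) (hf : Function.Surjective f)
    (P : Matrix (Fin N) (Fin M) ℝ)
    (hP : ∀ i j, P i j = if f i = j then 1 else 0)
    (PH R : Matrix (Fin N) (Fin N) ℝ)
    (hPH : PH = P * (Pᵀ * P)⁻¹ * Pᵀ)
    (hR : R = 1 - PH)
    (L : Matrix (Fin N) (Fin N) ℝ)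
    (hLap : L.mulVec (fun _ => 1) = 0)
    (hEEP : L * PH = PH * L * PH)
    (Lpi : Matrix (Fin M) (Fin M) ℝ)
    (hLpi : Lpi = (Pᵀ * P)⁻¹ * Pᵀ * L * P) :
    (R * L).charpoly * Lpi.charpoly = Polynomial.X ^ M * L.charpoly := by
  have hadd : R * L + PH * L = L := by
    rw [hR, Matrix.sub_mul, Matrix.one_mul, sub_add_cancel]
  have h0 : R * L * PH = 0 := by
    have expand : (1 - PH) * L * PH = L * PH - PH * L * PH := by
      rw [Matrix.sub_mul, Matrix.sub_mul, Matrix.one_mul]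
    rw [hR, expand, hEEP, sub_self]
  have hmul : (R * L) * (PH * L) = 0 := by
    rw [← Matrix.mul_assoc (R * L) PH L, h0, Matrix.zero_mul]
  have key1 : (R * L).charpoly * (PH * L).charpoly = X ^ N * L.charpoly := by
    have := charpoly_mul_of_add_of_mul_eq_zero (R * L) (PH * L) L hadd hmul
    rwa [Fintype.card_fin] at this
  set B : Matrix (Fin M) (Fin N) ℝ := (Pᵀ * P)⁻¹ * Pᵀ * L with hB
  have hPHL : PH * L = P * B := by
    rw [hPH, hB]; simp only [Matrix.mul_assoc]
  have hBP : B * P = Lpi := by rw [hB, hLpi]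
  have key2 : (PH * L).charpoly * X ^ M = X ^ N * Lpi.charpoly := by
    have := charpoly_mul_comm_rect P B
    rwa [Fintype.card_fin, Fintype.card_fin, ← hPHL, hBP] at this
  have hXN : (X : ℝ[X]) ^ N ≠ 0 := pow_ne_zero _ X_ne_zero
  apply mul_left_cancel₀ hXN
  calc (X : ℝ[X]) ^ N * ((R * L).charpoly * Lpi.charpoly)
      = (R * L).charpoly * (X ^ N * Lpi.charpoly) := by ring
    _ = (R * L).charpoly * ((PH * L).charpoly * X ^ M) := by rw [key2]
    _ = ((R * L).charpoly * (PH * L).charpoly) * X ^ M := by ring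
    _ = (X ^ N * L.charpoly) * X ^ M := by rw [key1]
    _ = X ^ N * (X ^ M * L.charpoly) := by ring
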